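/- Let n ≥ 1, 1 ≤ p < ∞, and let w be a T-invariant weight on ℝⁿ with dμ = w dx satisfying 0 < μ(B) < ∞ for all balls B. Then for every r > 0, cap_{p,μ}^{ℝⁿ}({0}, B(0,r)) = 2ⁿ · cap_{p,μ}^{X⁺}({0}, B(0,r) ∩ X⁺) = 2^{n−1} · cap_{p,μ}^{X_{ℝⁿ}}({0}, B(0,r) ∩ X_{ℝⁿ}), where the latter two capacities are taken with respect to X⁺ and the bow-tie X_{ℝⁿ} as the underlying metric measure spaces. -/

import Mathlib

open MeasureTheory Metric Set Filter ENNReal NNReal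

noncomputable section

/-- Pointwise Lipschitz constant (as an extended nonnegative real);
it is `0` at isolated points since the limsup is over the punctured neighbourhood filter. -/
def lipConst {X : Type*} [MetricSpace X] (u : X → ℝ) (x : X) : ℝ≥0∞ :=
  Filter.limsup (fun y => ENNReal.ofReal (|u y - u x| / dist y x)) (nhdsWithin x {x}ᶜ)

/-- A real-valued function is Lipschitz (with some constant). -/
def IsLip {X : Type*} [MetricSpace X] (u : X → ℝ) : Prop :=
  ∃ L : NNReal, LipschitzWith L u

/-- A doubling measure on a metric space: balls have positive finite measure and
`μ(B(x,2r)) ≤ C μ(B(x,r))`. -/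
def IsDoubling {X : Type*} [MetricSpace X] [MeasurableSpace X] (μ : Measure X) : Prop :=
  ∃ C : ℝ≥0∞, ∀ (x : X) (r : ℝ), 0 < r →
    0 < μ (ball x r) ∧ μ (ball x r) < ⊤ ∧ μ (ball x (2 * r)) ≤ C * μ (ball x r)

/-- The (q,p)-Poincaré inequality (Lipschitz formulation) with dilation constant `lam`. -/
def PoincareWith {X : Type*} [MetricSpace X] [MeasurableSpace X] (μ : Measure X)
    (q p lam : ℝ) : Prop :=
  ∃ C : ℝ, 0 < C ∧ ∀ (x : X) (r : ℝ), 0 < r → ∀ u : X → ℝ, IsLip u →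
    ((∫⁻ y in ball x r,
        ENNReal.ofReal |u y - ⨍ z in ball x r, u z ∂μ| ^ q ∂μ) / μ (ball x r)) ^ (1 / q)
      ≤ ENNReal.ofReal (C * r) *
        ((∫⁻ y in ball x (lam * r), lipConst u y ^ p ∂μ) / μ (ball x (lam * r))) ^ (1 / p)

/-- `μ` supports a (q,p)-Poincaré inequality (Lipschitz formulation). -/
def SupportsPoincare {X : Type*} [MetricSpace X] [MeasurableSpace X] (μ : Measure X)
    (q p : ℝ) : Prop :=
  ∃ lam : ℝ, 1 ≤ lam ∧ PoincareWith μ q p lam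

/-- The variational p-capacity (Lipschitz formulation) of `E` with respect to `Ω`. -/
def varCap {X : Type*} [MetricSpace X] [MeasurableSpace X] (μ : Measure X) (p : ℝ)
    (E Ω : Set X) : ℝ≥0∞ :=
  ⨅ (u : X → ℝ) (_ : IsLip u ∧ (∀ x ∈ E, u x = 1) ∧ (∀ x ∉ Ω, u x = 0)),
    ∫⁻ x in Ω, lipConst u x ^ p ∂μ

/-- Euclidean n-space. -/
abbrev En (n : ℕ) := EuclideanSpace ℝ (Fin n)

/-- The weighted measure `dμ = w dx`. -/
def wMeasure {n : ℕ} (w : En n → ℝ) : Measure (En n) :=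
  volume.withDensity (fun x => ENNReal.ofReal (w x))

/-- The positive hyperquadrant. -/
def Xplus (n : ℕ) : Set (En n) := {x : En n | ∀ j : Fin n, 0 ≤ x j}

/-- The negative hyperquadrant. -/
def Xminus (n : ℕ) : Set (En n) := {x : En n | ∀ j : Fin n, x j ≤ 0}

/-- The Euclidean bow-tie. -/
def XBow (n : ℕ) : Set (En n) := Xplus n ∪ Xminus n

/-- The restriction of a measure to a subset, as a measure on the subtype. -/
def subMeasure {X : Type*} [MeasurableSpace X] (μ : Measure X) (S : Set X) : Measure S :=
  μ.comap Subtype.val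

/-- The folding map `T(x₁,…,xₙ) = (|x₁|,…,|xₙ|)`. -/
def Tmap {n : ℕ} (x : En n) : En n := WithLp.toLp 2 (fun j => |x j|)

/-- Muckenhoupt A_p condition (for 1 ≤ p < ∞). -/
def IsApWeight {α : Type*} [MetricSpace α] [MeasureSpace α] (p : ℝ) (w : α → ℝ) : Prop :=
  (p = 1 ∧ ∃ C : ℝ, 0 < C ∧ ∀ (x : α) (r : ℝ), 0 < r →
      (⨍ y in ball x r, w y ∂volume) ≤ C * essInf w (volume.restrict (ball x r))) ∨
  (1 < p ∧ ∃ C : ℝ, 0 < C ∧ ∀ (x : α) (r : ℝ), 0 < r →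
      (⨍ y in ball x r, w y ∂volume) *
        (⨍ y in ball x r, w y ^ (1 / (1 - p)) ∂volume) ^ (p - 1) ≤ C)

/-- The surface area ω_{n-1} of the unit sphere in ℝⁿ (with ω₀ = 2),
computed as n times the volume of the unit ball. -/
def sphereArea (n : ℕ) : ℝ := n * (volume (ball (0 : En n) 1)).toReal

/-- The two-sided capacity estimate
`cap_{p,μ}^{X⁺}({0}, B_r ∩ X⁺) ≃ r^{-p} μ(B_r)` for all `r > 0`. -/
def capCondPlus (n : ℕ) (μ : Measure (En n)) (p : ℝ) : Prop :=
  ∃ c : ℝ, 1 ≤ c ∧ ∀ r : ℝ, 0 < r →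
    ENNReal.ofReal c⁻¹ * (μ (ball 0 r) / ENNReal.ofReal (r ^ p)) ≤
      varCap (subMeasure μ (Xplus n)) p {x : Xplus n | (x : En n) = 0}
        (Subtype.val ⁻¹' ball 0 r) ∧
    varCap (subMeasure μ (Xplus n)) p {x : Xplus n | (x : En n) = 0}
        (Subtype.val ⁻¹' ball 0 r) ≤
      ENNReal.ofReal c * (μ (ball 0 r) / ENNReal.ofReal (r ^ p))

/-- `φ(ρ) = max{1, -log ρ}`. -/
def phi (ρ : ℝ) : ℝ := max 1 (-Real.log ρ)
section Aux

/-- Main comparison lemma for `lipConst` under a 1-Lipschitz map. -/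
theorem lipConst_comp_le {X Y : Type*} [MetricSpace X] [MetricSpace Y] {φ : X → Y}
    (hφ : LipschitzWith 1 φ) (u : Y → ℝ) (x : X) :
    lipConst (u ∘ φ) x ≤ lipConst u (φ x) := by
  refine le_of_forall_gt_imp_ge_of_dense fun a ha => ?_
  have ha0 : (0 : ℝ≥0∞) < a := zero_le.trans_lt ha
  have hev : ∀ᶠ z in nhdsWithin (φ x) {φ x}ᶜ,
      ENNReal.ofReal (|u z - u (φ x)| / dist z (φ x)) < a :=
    Filter.eventually_lt_of_limsup_lt ha
  have hev2 : ∀ᶠ z in nhds (φ x),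
      ENNReal.ofReal (|u z - u (φ x)| / dist z (φ x)) < a := by
    rw [← nhdsNE_sup_pure (φ x), Filter.eventually_sup]
    refine ⟨hev, ?_⟩
    simpa using ha0
  have htend : Filter.Tendsto φ (nhdsWithin x {x}ᶜ) (nhds (φ x)) :=
    (hφ.continuous.tendsto x).mono_left nhdsWithin_le_nhds
  have hev3 : ∀ᶠ y in nhdsWithin x {x}ᶜ,
      ENNReal.ofReal (|u (φ y) - u (φ x)| / dist (φ y) (φ x)) < a := htend.eventually hev2
  refine Filter.limsup_le_of_le (by isBoundedDefault) ?_
  filter_upwards [hev3] with y hy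
  refine le_of_lt (lt_of_le_of_lt ?_ hy)
  by_cases hxy : φ y = φ x
  · simp [Function.comp, hxy]
  · refine ENNReal.ofReal_le_ofReal ?_
    have h1 : (0:ℝ) < dist (φ y) (φ x) := dist_pos.2 hxy
    have h2 : dist (φ y) (φ x) ≤ dist y x := by simpa using hφ.dist_le_mul y x
    simp only [Function.comp]
    gcongr

end Aux
section Refl

variable {n : ℕ}

/-- Reflection of coordinates given by a sign pattern. -/
def reflE (ε : Fin n → Bool) : En n ≃ₗᵢ[ℝ] En n :=
  LinearIsometryEquiv.piLpCongrRight 2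
    (fun j => if ε j then LinearIsometryEquiv.neg ℝ else LinearIsometryEquiv.refl ℝ ℝ)

lemma reflE_apply (ε : Fin n → Bool) (x : En n) (j : Fin n) :
    reflE ε x j = if ε j then -(x j) else x j := by
  simp only [reflE, LinearIsometryEquiv.piLpCongrRight_apply]
  by_cases h : ε j <;> simp [h]

lemma reflE_reflE (ε : Fin n → Bool) (x : En n) : reflE ε (reflE ε x) = x := by
  ext j
  simp only [reflE_apply]
  by_cases h : ε j <;> simp [h]

lemma Tmap_reflE (ε : Fin n → Bool) (x : En n) : Tmap (reflE ε x) = Tmap x := by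
  ext j
  simp only [Tmap, reflE_apply]
  by_cases h : ε j <;> simp [h]

lemma measurable_reflE (ε : Fin n → Bool) : Measurable (reflE ε) :=
  (reflE ε).continuous.measurable

/-- `reflE ε` as a measurable equivalence. -/
def reflME (ε : Fin n → Bool) : En n ≃ᵐ En n :=
  (reflE ε).toHomeomorph.toMeasurableEquiv

lemma reflME_coe (ε : Fin n → Bool) : (reflME ε : En n → En n) = reflE ε := rfl

lemma reflE_emb (ε : Fin n → Bool) : MeasurableEmbedding (reflE ε) := by
  have := (reflME ε).measurableEmbedding
  rwa [reflME_coe] at this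

lemma reflE_preimage_ball (ε : Fin n → Bool) {r : ℝ} :
    (reflE ε) ⁻¹' (ball (0 : En n) r) = ball (0 : En n) r := by
  ext x
  simp [mem_ball_zero_iff, (reflE ε).norm_map]

end Refl
section Sets

variable {n : ℕ}

lemma measurable_coordinate (j : Fin n) : Measurable fun x : En n => x j :=
  (EuclideanSpace.proj (𝕜 := ℝ) j).continuous.measurable

lemma measurableSet_Xplus : MeasurableSet (Xplus n) := by
  have : Xplus n = ⋂ j, {x : En n | 0 ≤ x j} := by
    ext x; simp [Xplus]
  rw [this]
  exact MeasurableSet.iInter fun j => measurableSet_le measurable_const (measurable_coordinate j)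

lemma measurableSet_Xminus : MeasurableSet (Xminus n) := by
  have : Xminus n = ⋂ j, {x : En n | x j ≤ 0} := by
    ext x; simp [Xminus]
  rw [this]
  exact MeasurableSet.iInter fun j => measurableSet_le (measurable_coordinate j) measurable_const

lemma measurableSet_XBow : MeasurableSet (XBow n) :=
  measurableSet_Xplus.union measurableSet_Xminus

/-- Closed quadrant for the sign pattern `ε`. -/
def Qset (ε : Fin n → Bool) : Set (En n) := (reflE ε) ⁻¹' (Xplus n)

/-- Half-open quadrant for the sign pattern `ε`; these form a partition of space. -/
def Qdset (ε : Fin n → Bool) : Set (En n) :=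
  {x : En n | ∀ j, if ε j then x j < 0 else 0 ≤ x j}

/-- Union of coordinate hyperplanes. -/
def Zset (n : ℕ) : Set (En n) := ⋃ j : Fin n, {x : En n | x j = 0}

lemma measurableSet_Qset (ε : Fin n → Bool) : MeasurableSet (Qset ε) :=
  measurableSet_Xplus.preimage (measurable_reflE ε)

lemma measurableSet_Qdset (ε : Fin n → Bool) : MeasurableSet (Qdset ε) := by
  have : Qdset ε = ⋂ j, {x : En n | if ε j then x j < 0 else 0 ≤ x j} := by
    ext x; simp [Qdset]
  rw [this]
  refine MeasurableSet.iInter fun j => ?_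
  by_cases h : ε j <;> simp only [h, if_true, if_false]
  · exact measurableSet_lt (measurable_coordinate j) measurable_const
  · exact measurableSet_le measurable_const (measurable_coordinate j)

lemma preimage_reflE_Qset (ε : Fin n → Bool) : (reflE ε) ⁻¹' (Qset ε) = Xplus n := by
  ext x
  simp only [Qset, Set.mem_preimage, reflE_reflE]

lemma mem_Qset_iff (ε : Fin n → Bool) (x : En n) :
    x ∈ Qset ε ↔ ∀ j, if ε j then x j ≤ 0 else 0 ≤ x j := by
  simp only [Qset, Set.mem_preimage, Xplus, Set.mem_setOf_eq]
  refine forall_congr' fun j => ?_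
  rw [reflE_apply]
  by_cases h : ε j <;> simp [h]

lemma Qdset_subset_Qset' (ε : Fin n → Bool) : Qdset ε ⊆ Qset ε := by
  intro x hx
  rw [mem_Qset_iff]
  intro j
  have := hx j
  by_cases h : ε j <;> simp [h] at this ⊢ <;> [exact this.le; exact this]

lemma Qset_diff_Qdset (ε : Fin n → Bool) : Qset ε \ Qdset ε ⊆ Zset n := by
  rintro x ⟨hq, hd⟩
  rw [mem_Qset_iff] at hq
  simp only [Qdset, Set.mem_setOf_eq, not_forall] at hd
  obtain ⟨j, hj⟩ := hd
  refine Set.mem_iUnion.2 ⟨j, ?_⟩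
  have h1 := hq j
  by_cases h : ε j <;> simp [h] at h1 hj ⊢
  · linarith
  · linarith

lemma Qdset_disjoint : Pairwise (Function.onFun Disjoint (Qdset (n := n))) := by
  intro ε ε' hne
  rw [Function.onFun, Set.disjoint_left]
  intro x hx hx'
  apply hne
  funext j
  have h1 := hx j
  have h2 := hx' j
  by_cases h : ε j <;> by_cases h' : ε' j <;> simp [h, h'] at h1 h2 ⊢ <;> linarith

lemma Qdset_cover : ⋃ ε : Fin n → Bool, Qdset ε = Set.univ := by
  ext x
  simp only [Set.mem_iUnion, Set.mem_univ, iff_true]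
  refine ⟨fun j => decide (x j < 0), fun j => ?_⟩
  simp only [Qdset, Set.mem_setOf_eq]
  by_cases h : x j < 0
  · simp [h]
  · simp only [h, decide_eq_false_iff_not.mpr h, if_false]
    exact le_of_not_gt h

lemma Xminus_eq_Qset : Xminus n = Qset (fun _ => true) := by
  ext x
  rw [mem_Qset_iff]
  simp [Xminus]

end Sets
section Meas

variable {n : ℕ} {w : En n → ℝ}

lemma volume_hyperplane (j : Fin n) : volume {x : En n | x j = 0} = 0 := by
  have h : {x : En n | x j = 0} =
      (LinearMap.ker (EuclideanSpace.projₗ (𝕜 := ℝ) j) : Submodule ℝ (En n)) := by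
    ext x
    simp [LinearMap.mem_ker]
  rw [h]
  refine Measure.addHaar_submodule _ _ ?_
  intro htop
  have hmem : (EuclideanSpace.single j (1:ℝ) : En n) ∈
      LinearMap.ker (EuclideanSpace.projₗ (𝕜 := ℝ) j) := htop ▸ Submodule.mem_top
  simp [LinearMap.mem_ker, EuclideanSpace.single_apply] at hmem

lemma wMeasure_null {s : Set (En n)} (hs : volume s = 0) : wMeasure w s = 0 :=
  (withDensity_absolutelyContinuous volume _) hs

lemma null_Zset : wMeasure w (Zset n) = 0 :=
  measure_mono_null (by simp [Zset]) <| measure_iUnion_null fun j =>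
    wMeasure_null (volume_hyperplane j)

lemma map_reflE_wMeasure (hT : ∀ x, w (Tmap x) = w x) (ε : Fin n → Bool) :
    Measure.map (reflE ε) (wMeasure w) = wMeasure w := by
  have hw : ∀ x, w (reflE ε x) = w x := fun x => by
    rw [← hT (reflE ε x), Tmap_reflE, hT]
  ext s hs
  rw [Measure.map_apply (measurable_reflE ε) hs]
  rw [wMeasure, withDensity_apply _ (hs.preimage (measurable_reflE ε)), withDensity_apply _ hs]
  have hmp : MeasurePreserving (reflE ε) (volume : Measure (En n)) volume :=
    (reflE ε).measurePreserving
  rw [← (hmp.restrict_preimage hs).map_eq, (reflE_emb ε).lintegral_map]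
  exact lintegral_congr fun x => by rw [hw]

lemma restrict_transport (hT : ∀ x, w (Tmap x) = w x) (ε : Fin n → Bool) {r : ℝ} :
    (wMeasure w).restrict (Qset ε ∩ ball 0 r) =
      Measure.map (reflE ε) ((wMeasure w).restrict (Xplus n ∩ ball 0 r)) := by
  conv_lhs => rw [← map_reflE_wMeasure hT ε]
  rw [Measure.restrict_map (measurable_reflE ε) ((measurableSet_Qset ε).inter measurableSet_ball)]
  rw [Set.preimage_inter, preimage_reflE_Qset, reflE_preimage_ball]

lemma key_decomp (hT : ∀ x, w (Tmap x) = w x) {r : ℝ} (f : En n → ℝ≥0∞) :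
    ∫⁻ x in ball (0 : En n) r, f x ∂(wMeasure w) =
      ∑ ε : Fin n → Bool, ∫⁻ x in Xplus n ∩ ball 0 r, f (reflE ε x) ∂(wMeasure w) := by
  have hcover : ball (0 : En n) r = ⋃ ε : Fin n → Bool, (Qdset ε ∩ ball 0 r) := by
    rw [← Set.iUnion_inter, Qdset_cover, Set.univ_inter]
  conv_lhs => rw [hcover]
  rw [lintegral_iUnion (fun ε => (measurableSet_Qdset ε).inter measurableSet_ball)
    (fun _ _ hne => Disjoint.mono inter_subset_left inter_subset_left (Qdset_disjoint hne)) f,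
    tsum_fintype]
  refine Finset.sum_congr rfl fun ε _ => ?_
  have hres : (wMeasure w).restrict (Qdset ε ∩ ball 0 r) =
      (wMeasure w).restrict (Qset ε ∩ ball 0 r) := by
    refine Measure.restrict_congr_set ?_
    rw [ae_eq_set]
    constructor
    · have h0 : (Qdset ε ∩ ball 0 r) \ (Qset ε ∩ ball 0 r) = (∅ : Set (En n)) :=
        Set.diff_eq_empty.mpr (Set.inter_subset_inter_left _ (Qdset_subset_Qset' ε))
      rw [h0]; exact measure_empty
    · refine measure_mono_null ?_ (null_Zset (w := w))
      rintro x ⟨⟨hq, hb⟩, hnd⟩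
      exact Qset_diff_Qdset ε ⟨hq, fun h => hnd ⟨h, hb⟩⟩
  rw [hres, restrict_transport hT ε, (reflE_emb ε).lintegral_map]

lemma keyBow (hT : ∀ x, w (Tmap x) = w x) (hn : 1 ≤ n) {r : ℝ} (f : En n → ℝ≥0∞) :
    ∫⁻ x in XBow n ∩ ball (0:En n) r, f x ∂(wMeasure w) =
      ∫⁻ x in Xplus n ∩ ball 0 r, f x ∂(wMeasure w) +
        ∫⁻ x in Xplus n ∩ ball 0 r, f (reflE (fun _ => true) x) ∂(wMeasure w) := by
  have hXB : XBow n ∩ ball (0:En n) r =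
      (Xplus n ∩ ball 0 r) ∪ (Xminus n ∩ ball 0 r) := by
    rw [XBow, Set.union_inter_distrib_right]
  have hA : MeasurableSet (Xplus n ∩ ball (0:En n) r) :=
    measurableSet_Xplus.inter measurableSet_ball
  have hB : MeasurableSet (Xminus n ∩ ball (0:En n) r) :=
    measurableSet_Xminus.inter measurableSet_ball
  have h1 : (Xplus n ∩ ball (0:En n) r) ∪ (Xminus n ∩ ball 0 r) =
      (Xplus n ∩ ball 0 r) ∪ ((Xminus n ∩ ball 0 r) \ (Xplus n ∩ ball 0 r)) :=
    (Set.union_diff_self).symm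
  rw [hXB, h1, lintegral_union (hB.diff hA) disjoint_sdiff_right]
  congr 1
  have hres : (wMeasure w).restrict ((Xminus n ∩ ball (0:En n) r) \ (Xplus n ∩ ball 0 r)) =
      (wMeasure w).restrict (Xminus n ∩ ball 0 r) := by
    refine Measure.restrict_congr_set ?_
    rw [ae_eq_set]
    constructor
    · have h0 : ((Xminus n ∩ ball (0:En n) r) \ (Xplus n ∩ ball 0 r)) \
          (Xminus n ∩ ball 0 r) = (∅ : Set (En n)) :=
        Set.diff_eq_empty.mpr Set.diff_subset
      rw [h0]; exact measure_empty
    · refine measure_mono_null ?_ (null_Zset (w := w))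
      rintro x ⟨⟨hm, hb⟩, hnd⟩
      have hx : x ∈ Xplus n := by
        by_contra hxp
        exact hnd ⟨⟨hm, hb⟩, fun h => hxp h.1⟩
      refine Set.mem_iUnion.2 ⟨⟨0, hn⟩, le_antisymm (hm _) (hx _)⟩
  rw [hres]
  have h2 : Xminus n ∩ ball (0:En n) r = Qset (fun _ => true) ∩ ball 0 r := by
    rw [Xminus_eq_Qset]
  rw [h2, restrict_transport hT _, (reflE_emb _).lintegral_map]

lemma lintegral_sub_eq {S : Set (En n)} (hS : MeasurableSet S) (g : En n → ℝ≥0∞) {r : ℝ} :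
    ∫⁻ x in (Subtype.val ⁻¹' ball (0:En n) r : Set S), g x.val ∂(subMeasure (wMeasure w) S) =
      ∫⁻ x in S ∩ ball 0 r, g x ∂(wMeasure w) := by
  have emb := MeasurableEmbedding.subtype_coe hS
  have hpre : MeasurableSet (Subtype.val ⁻¹' ball (0:En n) r : Set S) :=
    measurable_subtype_coe measurableSet_ball
  rw [← lintegral_indicator hpre]
  have hind : ∀ x : S, (Subtype.val ⁻¹' ball (0:En n) r).indicator
      (fun x : S => g x.val) x = ((ball (0:En n) r).indicator g) x.val := by
    intro x
    by_cases h : (x : En n) ∈ ball (0:En n) r <;>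
      simp [Set.indicator, h]
  rw [lintegral_congr hind]
  have h3 : ∫⁻ (x : S), ((ball (0:En n) r).indicator g) x.val ∂(subMeasure (wMeasure w) S) =
      ∫⁻ y, ((ball (0:En n) r).indicator g) y ∂(Measure.map Subtype.val
        (subMeasure (wMeasure w) S)) := (emb.lintegral_map _).symm
  rw [h3, subMeasure, emb.map_comap, Subtype.range_coe,
    lintegral_indicator measurableSet_ball, Measure.restrict_restrict measurableSet_ball,
    Set.inter_comm]

end Meas
section LipStuff

variable {n : ℕ}

lemma Tmap_lipschitz : LipschitzWith 1 (Tmap : En n → En n) := by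
  refine LipschitzWith.of_dist_le_mul fun x y => ?_
  rw [NNReal.coe_one, one_mul, EuclideanSpace.dist_eq, EuclideanSpace.dist_eq]
  refine Real.sqrt_le_sqrt (Finset.sum_le_sum fun i _ => ?_)
  refine pow_le_pow_left₀ dist_nonneg ?_ 2
  rw [Real.dist_eq, Real.dist_eq]
  exact abs_abs_sub_abs_le_abs_sub (x i) (y i)

lemma norm_Tmap (x : En n) : ‖Tmap x‖ = ‖x‖ := by
  rw [EuclideanSpace.norm_eq, EuclideanSpace.norm_eq]
  congr 1
  refine Finset.sum_congr rfl fun i _ => ?_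
  simp [Tmap, Real.norm_eq_abs, abs_abs]

lemma Tmap_zero : Tmap (0 : En n) = 0 := by
  ext j
  simp [Tmap]

lemma Tmap_id_of_mem {x : En n} (hx : x ∈ Xplus n) : Tmap x = x := by
  ext j
  exact abs_of_nonneg (hx j)

/-- Folding map into the positive quadrant, as a map to the subtype. -/
def tauP (x : En n) : Xplus n := ⟨Tmap x, fun j => abs_nonneg _⟩

lemma tauP_lipschitz : LipschitzWith 1 (tauP : En n → Xplus n) := by
  refine LipschitzWith.of_dist_le_mul fun x y => ?_
  rw [NNReal.coe_one, one_mul, Subtype.dist_eq]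
  simpa [tauP] using (Tmap_lipschitz (n := n)).dist_le_mul x y

lemma tauP_val (x : En n) : (tauP x : En n) = Tmap x := rfl

lemma tauP_mem_ball_iff {r : ℝ} (x : En n) :
    ((tauP x : En n) ∈ ball (0 : En n) r) ↔ x ∈ ball (0 : En n) r := by
  rw [mem_ball_zero_iff, mem_ball_zero_iff, tauP_val, norm_Tmap]

lemma tauP_of_mem {x : En n} (hx : x ∈ Xplus n) : tauP x = ⟨x, hx⟩ :=
  Subtype.ext (Tmap_id_of_mem hx)

lemma reflE_true_eq_neg (x : En n) : reflE (fun _ => true) x = -x := by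
  ext j
  rw [reflE_apply]
  simp

/-- lipConst of a Lipschitz competitor on the quadrant, extended to all of space. -/
def Gfun (u : Xplus n → ℝ) : En n → ℝ≥0∞ := fun y => lipConst u (tauP y)

lemma Gfun_reflE (u : Xplus n → ℝ) (ε : Fin n → Bool) (y : En n) :
    Gfun u (reflE ε y) = Gfun u y := by
  unfold Gfun
  congr 1
  exact Subtype.ext (by rw [tauP_val, tauP_val, Tmap_reflE])

lemma Gfun_val (u : Xplus n → ℝ) (x : Xplus n) : Gfun u (x : En n) = lipConst u x := by
  unfold Gfun
  congr 1
  exact Subtype.ext (by rw [tauP_val, Tmap_id_of_mem x.2])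

open Classical in
/-- lipConst of a competitor on the bow-tie, extended (by zero) to all of space. -/
def Kfun (v : XBow n → ℝ) : En n → ℝ≥0∞ := fun y =>
  if h : y ∈ XBow n then lipConst v ⟨y, h⟩ else 0

lemma Kfun_val (v : XBow n → ℝ) (x : XBow n) : Kfun v (x : En n) = lipConst v x := by
  unfold Kfun
  rw [dif_pos x.2, Subtype.coe_eta]

end LipStuff
section Cap

variable {n : ℕ} {w : En n → ℝ} {p r : ℝ}

lemma sum_const_pow (c : ℝ≥0∞) : ∑ _ε : Fin n → Bool, c = 2 ^ n * c := by
  rw [Finset.sum_const, Finset.card_univ]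
  have h : Fintype.card (Fin n → Bool) = 2 ^ n := by simp
  rw [h, nsmul_eq_mul]
  push_cast
  ring

lemma cap_le_quad (hT : ∀ x, w (Tmap x) = w x) (hp : 1 ≤ p) :
    varCap (wMeasure w) p ({0} : Set (En n)) (ball 0 r) ≤
      2 ^ n * varCap (subMeasure (wMeasure w) (Xplus n)) p
        {x : Xplus n | (x : En n) = 0} (Subtype.val ⁻¹' ball 0 r) := by
  have h2n0 : (2:ℝ≥0∞) ^ n ≠ 0 := pow_ne_zero _ two_ne_zero
  have h2nt : (2:ℝ≥0∞) ^ n ≠ ⊤ := ENNReal.pow_ne_top ENNReal.ofNat_ne_top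
  conv_rhs => rw [varCap]
  rw [ENNReal.mul_iInf_of_ne h2n0 h2nt]
  refine le_iInf fun u => ?_
  rw [ENNReal.mul_iInf_of_ne h2n0 h2nt]
  refine le_iInf fun hu => ?_
  obtain ⟨⟨L, hL⟩, hu1, hu0⟩ := hu
  have hadm : IsLip (u ∘ tauP) ∧ (∀ x ∈ ({0} : Set (En n)), (u ∘ tauP) x = 1) ∧
      (∀ x ∉ ball (0:En n) r, (u ∘ tauP) x = 0) := by
    refine ⟨⟨L * 1, hL.comp tauP_lipschitz⟩, ?_, ?_⟩
    · intro x hx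
      rw [Set.mem_singleton_iff] at hx
      subst hx
      refine hu1 (tauP 0) ?_
      show ((tauP (0 : En n)) : En n) = 0
      rw [tauP_val, Tmap_zero]
    · intro x hx
      exact hu0 (tauP x) fun hmem => hx ((tauP_mem_ball_iff x).1 hmem)
  refine le_trans (iInf₂_le (u ∘ tauP) hadm) ?_
  have hp0 : (0:ℝ) ≤ p := le_trans zero_le_one hp
  calc ∫⁻ x in ball (0:En n) r, lipConst (u ∘ tauP) x ^ p ∂(wMeasure w)
      ≤ ∫⁻ x in ball (0:En n) r, Gfun u x ^ p ∂(wMeasure w) :=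
        lintegral_mono fun x => ENNReal.rpow_le_rpow (lipConst_comp_le tauP_lipschitz u x) hp0
    _ = ∑ ε : Fin n → Bool, ∫⁻ x in Xplus n ∩ ball 0 r, Gfun u (reflE ε x) ^ p ∂(wMeasure w) :=
        key_decomp hT _
    _ = ∑ _ε : Fin n → Bool, ∫⁻ x in Xplus n ∩ ball 0 r, Gfun u x ^ p ∂(wMeasure w) :=
        Finset.sum_congr rfl fun ε _ => lintegral_congr fun x => by rw [Gfun_reflE]
    _ = 2 ^ n * ∫⁻ x in Xplus n ∩ ball 0 r, Gfun u x ^ p ∂(wMeasure w) := sum_const_pow _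
    _ = 2 ^ n * ∫⁻ x in (Subtype.val ⁻¹' ball (0:En n) r : Set (Xplus n)),
          lipConst u x ^ p ∂(subMeasure (wMeasure w) (Xplus n)) := by
        rw [← lintegral_sub_eq measurableSet_Xplus (fun y => Gfun u y ^ p)]
        exact congrArg (fun z => (2:ℝ≥0∞) ^ n * z)
          (lintegral_congr fun x => by rw [Gfun_val])

lemma quad_le_cap (hT : ∀ x, w (Tmap x) = w x) (hp : 1 ≤ p) :
    2 ^ n * varCap (subMeasure (wMeasure w) (Xplus n)) p
        {x : Xplus n | (x : En n) = 0} (Subtype.val ⁻¹' ball 0 r) ≤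
      varCap (wMeasure w) p ({0} : Set (En n)) (ball 0 r) := by
  have hp0 : (0:ℝ) ≤ p := le_trans zero_le_one hp
  conv_rhs => rw [varCap]
  refine le_iInf fun v => le_iInf fun hv => ?_
  obtain ⟨⟨L, hL⟩, hv1, hv0⟩ := hv
  refine le_trans ?_ (le_of_eq (key_decomp hT (fun x => lipConst v x ^ p)).symm)
  have hterm : ∀ ε : Fin n → Bool,
      varCap (subMeasure (wMeasure w) (Xplus n)) p
        {x : Xplus n | (x : En n) = 0} (Subtype.val ⁻¹' ball 0 r) ≤
      ∫⁻ x in Xplus n ∩ ball 0 r, lipConst v (reflE ε x) ^ p ∂(wMeasure w) := by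
    intro ε
    have hφlip : LipschitzWith 1 (fun x : Xplus n => reflE ε (x : En n)) := by
      refine LipschitzWith.of_dist_le_mul fun a b => ?_
      rw [NNReal.coe_one, one_mul, (reflE ε).isometry.dist_eq, Subtype.dist_eq]
    have hadm : IsLip (v ∘ fun x : Xplus n => reflE ε (x : En n)) ∧
        (∀ x ∈ {x : Xplus n | (x : En n) = 0},
          (v ∘ fun x : Xplus n => reflE ε (x : En n)) x = 1) ∧
        (∀ x ∉ (Subtype.val ⁻¹' ball (0:En n) r : Set (Xplus n)),
          (v ∘ fun x : Xplus n => reflE ε (x : En n)) x = 0) := by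
      refine ⟨⟨L * 1, hL.comp hφlip⟩, ?_, ?_⟩
      · intro x hx
        have hx0 : (x : En n) = 0 := hx
        show v (reflE ε (x : En n)) = 1
        rw [hx0, map_zero]
        exact hv1 0 rfl
      · intro x hx
        show v (reflE ε (x : En n)) = 0
        refine hv0 _ fun hmem => hx ?_
        rw [mem_ball_zero_iff, (reflE ε).norm_map] at hmem
        rw [Set.mem_preimage, mem_ball_zero_iff]
        exact hmem
    refine le_trans (iInf₂_le (v ∘ fun x : Xplus n => reflE ε (x : En n)) hadm) ?_
    calc ∫⁻ x in (Subtype.val ⁻¹' ball (0:En n) r : Set (Xplus n)),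
          lipConst (v ∘ fun x : Xplus n => reflE ε (x : En n)) x ^ p
            ∂(subMeasure (wMeasure w) (Xplus n))
        ≤ ∫⁻ x in (Subtype.val ⁻¹' ball (0:En n) r : Set (Xplus n)),
            (fun y : En n => lipConst v (reflE ε y) ^ p) (x : En n)
              ∂(subMeasure (wMeasure w) (Xplus n)) :=
          lintegral_mono fun x => ENNReal.rpow_le_rpow (lipConst_comp_le hφlip v x) hp0
      _ = ∫⁻ y in Xplus n ∩ ball 0 r, lipConst v (reflE ε y) ^ p ∂(wMeasure w) :=
          lintegral_sub_eq measurableSet_Xplus (fun y : En n => lipConst v (reflE ε y) ^ p)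
  calc 2 ^ n * varCap (subMeasure (wMeasure w) (Xplus n)) p
        {x : Xplus n | (x : En n) = 0} (Subtype.val ⁻¹' ball 0 r)
      = ∑ _ε : Fin n → Bool, varCap (subMeasure (wMeasure w) (Xplus n)) p
          {x : Xplus n | (x : En n) = 0} (Subtype.val ⁻¹' ball 0 r) := (sum_const_pow _).symm
    _ ≤ ∑ ε : Fin n → Bool, ∫⁻ x in Xplus n ∩ ball 0 r,
          lipConst v (reflE ε x) ^ p ∂(wMeasure w) :=
        Finset.sum_le_sum fun ε _ => hterm ε

lemma capBow_le_two (hT : ∀ x, w (Tmap x) = w x) (hn : 1 ≤ n) (hp : 1 ≤ p) :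
    varCap (subMeasure (wMeasure w) (XBow n)) p {x : XBow n | (x : En n) = 0}
        (Subtype.val ⁻¹' ball 0 r) ≤
      2 * varCap (subMeasure (wMeasure w) (Xplus n)) p {x : Xplus n | (x : En n) = 0}
        (Subtype.val ⁻¹' ball 0 r) := by
  have h20 : (2:ℝ≥0∞) ≠ 0 := two_ne_zero
  have h2t : (2:ℝ≥0∞) ≠ ⊤ := ENNReal.ofNat_ne_top
  have hp0 : (0:ℝ) ≤ p := le_trans zero_le_one hp
  conv_rhs => rw [varCap]
  rw [ENNReal.mul_iInf_of_ne h20 h2t]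
  refine le_iInf fun u => ?_
  rw [ENNReal.mul_iInf_of_ne h20 h2t]
  refine le_iInf fun hu => ?_
  obtain ⟨⟨L, hL⟩, hu1, hu0⟩ := hu
  have hfold : LipschitzWith 1 (fun x : XBow n => tauP (x : En n)) := by
    have h := tauP_lipschitz.comp (LipschitzWith.subtype_val (XBow n))
    rw [mul_one] at h
    exact h
  have hadm : IsLip (u ∘ fun x : XBow n => tauP (x : En n)) ∧
      (∀ x ∈ {x : XBow n | (x : En n) = 0},
        (u ∘ fun x : XBow n => tauP (x : En n)) x = 1) ∧
      (∀ x ∉ (Subtype.val ⁻¹' ball (0:En n) r : Set (XBow n)),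
        (u ∘ fun x : XBow n => tauP (x : En n)) x = 0) := by
    refine ⟨⟨L * 1, hL.comp hfold⟩, ?_, ?_⟩
    · intro x hx
      have hx0 : (x : En n) = 0 := hx
      show u (tauP (x : En n)) = 1
      refine hu1 _ ?_
      show ((tauP ((x : En n))) : En n) = 0
      rw [hx0, tauP_val, Tmap_zero]
    · intro x hx
      show u (tauP (x : En n)) = 0
      exact hu0 _ fun hmem => hx ((tauP_mem_ball_iff _).1 hmem)
  refine le_trans (iInf₂_le (u ∘ fun x : XBow n => tauP (x : En n)) hadm) ?_
  calc ∫⁻ x in (Subtype.val ⁻¹' ball (0:En n) r : Set (XBow n)),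
        lipConst (u ∘ fun x : XBow n => tauP (x : En n)) x ^ p
          ∂(subMeasure (wMeasure w) (XBow n))
      ≤ ∫⁻ x in (Subtype.val ⁻¹' ball (0:En n) r : Set (XBow n)),
          (fun y : En n => Gfun u y ^ p) (x : En n) ∂(subMeasure (wMeasure w) (XBow n)) :=
        lintegral_mono fun x => ENNReal.rpow_le_rpow (lipConst_comp_le hfold u x) hp0
    _ = ∫⁻ y in XBow n ∩ ball 0 r, Gfun u y ^ p ∂(wMeasure w) :=
        lintegral_sub_eq measurableSet_XBow (fun y : En n => Gfun u y ^ p)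
    _ = ∫⁻ y in Xplus n ∩ ball 0 r, Gfun u y ^ p ∂(wMeasure w) +
        ∫⁻ y in Xplus n ∩ ball 0 r, Gfun u (reflE (fun _ => true) y) ^ p ∂(wMeasure w) :=
        keyBow hT hn _
    _ = 2 * ∫⁻ y in Xplus n ∩ ball 0 r, Gfun u y ^ p ∂(wMeasure w) := by
        rw [two_mul]
        congr 1
        exact lintegral_congr fun y => by rw [Gfun_reflE]
    _ = 2 * ∫⁻ x in (Subtype.val ⁻¹' ball (0:En n) r : Set (Xplus n)),
          lipConst u x ^ p ∂(subMeasure (wMeasure w) (Xplus n)) := by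
        rw [← lintegral_sub_eq measurableSet_Xplus (fun y => Gfun u y ^ p)]
        exact congrArg (fun z => 2 * z) (lintegral_congr fun x => by rw [Gfun_val])

lemma two_le_capBow (hT : ∀ x, w (Tmap x) = w x) (hn : 1 ≤ n) (hp : 1 ≤ p) :
    2 * varCap (subMeasure (wMeasure w) (Xplus n)) p {x : Xplus n | (x : En n) = 0}
        (Subtype.val ⁻¹' ball 0 r) ≤
      varCap (subMeasure (wMeasure w) (XBow n)) p {x : XBow n | (x : En n) = 0}
        (Subtype.val ⁻¹' ball 0 r) := by
  have hp0 : (0:ℝ) ≤ p := le_trans zero_le_one hp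
  conv_rhs => rw [varCap]
  refine le_iInf fun v => le_iInf fun hv => ?_
  obtain ⟨⟨L, hL⟩, hv1, hv0⟩ := hv
  have hneg_mem : ∀ x : Xplus n, -(x : En n) ∈ XBow n := by
    intro x
    refine Or.inr fun j => ?_
    have h := x.2 j
    have : (-(x : En n)) j = -((x : En n) j) := rfl
    rw [this]
    linarith
  set ι : Xplus n → XBow n := fun x => ⟨(x : En n), Or.inl x.2⟩ with hιdef
  set σ : Xplus n → XBow n := fun x => ⟨-(x : En n), hneg_mem x⟩ with hσdef
  have hιlip : LipschitzWith 1 ι := by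
    refine LipschitzWith.of_dist_le_mul fun a b => ?_
    rw [NNReal.coe_one, one_mul, Subtype.dist_eq, Subtype.dist_eq]
  have hσlip : LipschitzWith 1 σ := by
    refine LipschitzWith.of_dist_le_mul fun a b => ?_
    rw [NNReal.coe_one, one_mul, Subtype.dist_eq, Subtype.dist_eq]
    show dist (-(a : En n)) (-(b : En n)) ≤ dist (a : En n) (b : En n)
    rw [dist_neg_neg]
  have hadm1 : IsLip (v ∘ ι) ∧
      (∀ x ∈ {x : Xplus n | (x : En n) = 0}, (v ∘ ι) x = 1) ∧
      (∀ x ∉ (Subtype.val ⁻¹' ball (0:En n) r : Set (Xplus n)), (v ∘ ι) x = 0) := by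
    refine ⟨⟨L * 1, hL.comp hιlip⟩, ?_, ?_⟩
    · intro x hx
      exact hv1 (ι x) hx
    · intro x hx
      exact hv0 (ι x) hx
  have hadm2 : IsLip (v ∘ σ) ∧
      (∀ x ∈ {x : Xplus n | (x : En n) = 0}, (v ∘ σ) x = 1) ∧
      (∀ x ∉ (Subtype.val ⁻¹' ball (0:En n) r : Set (Xplus n)), (v ∘ σ) x = 0) := by
    refine ⟨⟨L * 1, hL.comp hσlip⟩, ?_, ?_⟩
    · intro x hx
      refine hv1 (σ x) ?_
      show -(x : En n) = 0
      rw [show (x : En n) = 0 from hx, neg_zero]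
    · intro x hx
      refine hv0 (σ x) fun hmem => hx ?_
      have h : -(x : En n) ∈ ball (0:En n) r := hmem
      rw [mem_ball_zero_iff, norm_neg] at h
      rw [Set.mem_preimage, mem_ball_zero_iff]
      exact h
  have h1 : varCap (subMeasure (wMeasure w) (Xplus n)) p {x : Xplus n | (x : En n) = 0}
        (Subtype.val ⁻¹' ball 0 r) ≤
      ∫⁻ y in Xplus n ∩ ball 0 r, Kfun v y ^ p ∂(wMeasure w) := by
    refine le_trans (iInf₂_le (v ∘ ι) hadm1) ?_
    calc ∫⁻ x in (Subtype.val ⁻¹' ball (0:En n) r : Set (Xplus n)),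
          lipConst (v ∘ ι) x ^ p ∂(subMeasure (wMeasure w) (Xplus n))
        ≤ ∫⁻ x in (Subtype.val ⁻¹' ball (0:En n) r : Set (Xplus n)),
            (fun y : En n => Kfun v y ^ p) (x : En n) ∂(subMeasure (wMeasure w) (Xplus n)) := by
          refine lintegral_mono fun x => ENNReal.rpow_le_rpow ?_ hp0
          have hK : Kfun v ((x : En n)) = lipConst v (ι x) := Kfun_val v (ι x)
          exact le_trans (lipConst_comp_le hιlip v x) (le_of_eq hK.symm)
      _ = ∫⁻ y in Xplus n ∩ ball 0 r, Kfun v y ^ p ∂(wMeasure w) :=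
          lintegral_sub_eq measurableSet_Xplus (fun y : En n => Kfun v y ^ p)
  have h2 : varCap (subMeasure (wMeasure w) (Xplus n)) p {x : Xplus n | (x : En n) = 0}
        (Subtype.val ⁻¹' ball 0 r) ≤
      ∫⁻ y in Xplus n ∩ ball 0 r, Kfun v (reflE (fun _ => true) y) ^ p ∂(wMeasure w) := by
    refine le_trans (iInf₂_le (v ∘ σ) hadm2) ?_
    calc ∫⁻ x in (Subtype.val ⁻¹' ball (0:En n) r : Set (Xplus n)),
          lipConst (v ∘ σ) x ^ p ∂(subMeasure (wMeasure w) (Xplus n))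
        ≤ ∫⁻ x in (Subtype.val ⁻¹' ball (0:En n) r : Set (Xplus n)),
            (fun y : En n => Kfun v (reflE (fun _ => true) y) ^ p) (x : En n)
              ∂(subMeasure (wMeasure w) (Xplus n)) := by
          refine lintegral_mono fun x => ENNReal.rpow_le_rpow ?_ hp0
          have hK : Kfun v (reflE (fun _ => true) (x : En n)) = lipConst v (σ x) := by
            rw [reflE_true_eq_neg]
            exact Kfun_val v (σ x)
          exact le_trans (lipConst_comp_le hσlip v x) (le_of_eq hK.symm)
      _ = ∫⁻ y in Xplus n ∩ ball 0 r, Kfun v (reflE (fun _ => true) y) ^ p ∂(wMeasure w) :=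
          lintegral_sub_eq measurableSet_Xplus (fun y : En n => Kfun v (reflE (fun _ => true) y) ^ p)
  calc 2 * varCap (subMeasure (wMeasure w) (Xplus n)) p {x : Xplus n | (x : En n) = 0}
        (Subtype.val ⁻¹' ball 0 r)
      = varCap (subMeasure (wMeasure w) (Xplus n)) p {x : Xplus n | (x : En n) = 0}
          (Subtype.val ⁻¹' ball 0 r) +
        varCap (subMeasure (wMeasure w) (Xplus n)) p {x : Xplus n | (x : En n) = 0}
          (Subtype.val ⁻¹' ball 0 r) := two_mul _
    _ ≤ ∫⁻ y in Xplus n ∩ ball 0 r, Kfun v y ^ p ∂(wMeasure w) +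
        ∫⁻ y in Xplus n ∩ ball 0 r, Kfun v (reflE (fun _ => true) y) ^ p ∂(wMeasure w) :=
        add_le_add h1 h2
    _ = ∫⁻ y in XBow n ∩ ball 0 r, Kfun v y ^ p ∂(wMeasure w) := (keyBow hT hn _).symm
    _ = ∫⁻ x in (Subtype.val ⁻¹' ball (0:En n) r : Set (XBow n)),
          lipConst v x ^ p ∂(subMeasure (wMeasure w) (XBow n)) := by
        rw [← lintegral_sub_eq measurableSet_XBow (fun y => Kfun v y ^ p)]
        exact lintegral_congr fun x => by rw [Kfun_val]

end Cap
theorem statement6 (n : ℕ) (hn : 1 ≤ n) (p : ℝ) (hp : 1 ≤ p)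
    (w : En n → ℝ) (hT : ∀ x, w (Tmap x) = w x)
    (hw0 : ∀ x, 0 ≤ w x) (hloc : LocallyIntegrable w volume)
    (hballs : ∀ (x : En n) (r : ℝ), 0 < r →
      0 < wMeasure w (ball x r) ∧ wMeasure w (ball x r) < ⊤)
    (r : ℝ) (hr : 0 < r) :
    varCap (wMeasure w) p ({0} : Set (En n)) (ball 0 r) =
      2 ^ n * varCap (subMeasure (wMeasure w) (Xplus n)) p
        {x : Xplus n | (x : En n) = 0} (Subtype.val ⁻¹' ball 0 r) ∧
    varCap (wMeasure w) p ({0} : Set (En n)) (ball 0 r) =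
      2 ^ (n - 1) * varCap (subMeasure (wMeasure w) (XBow n)) p
        {x : XBow n | (x : En n) = 0} (Subtype.val ⁻¹' ball 0 r) := by
  have e1 : varCap (wMeasure w) p ({0} : Set (En n)) (ball 0 r) =
      2 ^ n * varCap (subMeasure (wMeasure w) (Xplus n)) p
        {x : Xplus n | (x : En n) = 0} (Subtype.val ⁻¹' ball 0 r) :=
    le_antisymm (cap_le_quad hT hp) (quad_le_cap hT hp)
  have e2 : varCap (subMeasure (wMeasure w) (XBow n)) p {x : XBow n | (x : En n) = 0}
      (Subtype.val ⁻¹' ball 0 r) =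
      2 * varCap (subMeasure (wMeasure w) (Xplus n)) p {x : Xplus n | (x : En n) = 0}
        (Subtype.val ⁻¹' ball 0 r) :=
    le_antisymm (capBow_le_two hT hn hp) (two_le_capBow hT hn hp)
  refine ⟨e1, ?_⟩
  rw [e1, e2, ← mul_assoc, ← pow_succ, Nat.sub_add_cancel hn]
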